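/- Let d ≥ 1 and let ρ satisfy conditions (I) and (II). Fix ε ∈ ℂ with ε^d = −1 and define the pairing ⟨f,g⟩ = ∫_ℂ f(z)·conj(σg(z))·ρ(z) dx dy, where σg(z) = Σ_{ℓ=0}^{d−1} (−ε)^{−ℓ}·g_ℓ(ε·z). Then for all complex polynomials f and g one has ⟨f,g⟩ = conj(⟨g,f⟩); in particular ⟨f,f⟩ is real for every polynomial f. -/

import Mathlib

open MeasureTheory Polynomial Complex

/-- The weight-`ℓ` component (mod `d`) of a polynomial: the sum of its monomials
whose degree is congruent to `ℓ` mod `d`. -/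
noncomputable def weightComp (d ℓ : ℕ) (f : Polynomial ℂ) : Polynomial ℂ :=
  ∑ k ∈ f.support.filter (fun k => k % d = ℓ), Polynomial.monomial k (f.coeff k)

/-- A polynomial has weight `ℓ` (mod `d`) if all its monomials have degree `≡ ℓ [MOD d]`. -/
def HasWeight (d ℓ : ℕ) (f : Polynomial ℂ) : Prop :=
  ∀ k ∈ f.support, k % d = ℓ

/-- `σg(z) = Σ_{ℓ=0}^{d-1} (-ε)^{-ℓ} g_ℓ(ε z)`. -/
noncomputable def sigmaMap (d : ℕ) (ε : ℂ) (g : Polynomial ℂ) (z : ℂ) : ℂ :=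
  ∑ ℓ ∈ Finset.range d, (-ε) ^ (-(ℓ : ℤ)) * (weightComp d ℓ g).eval (ε * z)

/-- The pairing `⟨f,g⟩ = ∫_ℂ f(z) conj(σg(z)) ρ(z) dx dy`. -/
noncomputable def genPairing (d : ℕ) (ε : ℂ) (ρ : ℂ → ℂ) (f g : Polynomial ℂ) : ℂ :=
  ∫ z : ℂ, f.eval z * (starRingEnd ℂ) (sigmaMap d ε g z) * ρ z

/-- Condition (I): `ρ` is measurable and `∫_ℂ |z|^n |ρ(z)| dx dy < ∞` for all `n`. -/
def CondI (ρ : ℂ → ℂ) : Prop :=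
  Measurable ρ ∧
  ∀ n : ℕ, MeasureTheory.Integrable (fun z : ℂ => ‖z‖ ^ n * ‖ρ z‖)

/-- Condition (II): `ρ(ε z) = conj(ρ(z))` for every `ε` with `ε^d = -1`. -/
def CondII (d : ℕ) (ρ : ℂ → ℂ) : Prop :=
  ∀ ε : ℂ, ε ^ d = -1 → ∀ z : ℂ, ρ (ε * z) = (starRingEnd ℂ) (ρ z)

/-! ### Auxiliary definitions and lemmas -/

/-- The basic moment integral `J(k,j) = ∫ z^k conj(z)^j ρ(z)`. -/
noncomputable def Jint (ρ : ℂ → ℂ) (k j : ℕ) : ℂ :=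
  ∫ z : ℂ, z ^ k * (starRingEnd ℂ) z ^ j * ρ z

lemma integral_comp_rot {c : ℂ} (hc : ‖c‖ = 1) (F : ℂ → ℂ) :
    (∫ z : ℂ, F (c * z)) = ∫ z : ℂ, F z := by
  have hm : c ∈ Submonoid.unitSphere ℂ := by
    simp [Submonoid.unitSphere, hc]
  let a : Circle := ⟨c, hm⟩
  have h := (rotation a).measurePreserving
  have h2 := h.integral_comp (rotation a).toHomeomorph.measurableEmbedding F
  exact h2

lemma basic_integrable {ρ : ℂ → ℂ} (hI : CondI ρ) (k j : ℕ) :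
    Integrable (fun z : ℂ => z ^ k * (starRingEnd ℂ) z ^ j * ρ z) := by
  refine (hI.2 (k + j)).mono' ?_ ?_
  · have hρ := hI.1
    fun_prop
  · refine Filter.Eventually.of_forall fun z => le_of_eq (α := ℝ) ?_
    simp only [norm_mul, norm_pow, Complex.norm_conj, pow_add]

lemma abs_eq_one_of_pow {d : ℕ} (hd : 1 ≤ d) {ε : ℂ} (hε : ε ^ d = -1) : ‖ε‖ = 1 := by
  have h : ‖ε‖ ^ d = 1 := by rw [← norm_pow, hε]; simp
  rcases (pow_eq_one_iff_cases).mp h with h1 | h1 | h1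
  · omega
  · exact h1
  · nlinarith [norm_nonneg ε, h1.1]

lemma conj_eq_inv {ε : ℂ} (h : ‖ε‖ = 1) : (starRingEnd ℂ) ε = ε⁻¹ := by
  have h2 : ε * (starRingEnd ℂ) ε = 1 := by
    rw [Complex.mul_conj]; norm_cast; simp [Complex.normSq_eq_norm_sq, h]
  exact eq_inv_of_mul_eq_one_left (by rwa [mul_comm] at h2)

lemma eta_pow {d : ℕ} (hd : 1 ≤ d) : (Complex.exp (↑Real.pi * Complex.I / d)) ^ d = -1 := by
  rw [← Complex.exp_nat_mul]
  have hd0 : (d : ℂ) ≠ 0 := Nat.cast_ne_zero.mpr (by omega)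
  rw [show (d : ℂ) * (↑Real.pi * Complex.I / d) = ↑Real.pi * Complex.I by field_simp]
  exact Complex.exp_pi_mul_I

lemma eta_abs (d : ℕ) : ‖(Complex.exp (↑Real.pi * Complex.I / d))‖ = 1 := by
  rw [Complex.norm_exp]
  have : (↑Real.pi * Complex.I / d) = ((Real.pi / d : ℝ) : ℂ) * Complex.I := by push_cast; ring
  rw [this]
  simp

lemma mod_eq_of_eta_pow {d : ℕ} (hd : 1 ≤ d) {k j : ℕ}
    (h : (Complex.exp (↑Real.pi * Complex.I / d)) ^ (2 * k)
       = (Complex.exp (↑Real.pi * Complex.I / d)) ^ (2 * j)) : k % d = j % d := by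
  rw [← Complex.exp_nat_mul, ← Complex.exp_nat_mul, Complex.exp_eq_exp_iff_exists_int] at h
  obtain ⟨n, hn⟩ := h
  have hd0 : (d : ℂ) ≠ 0 := Nat.cast_ne_zero.mpr (by omega)
  have hπ : (Real.pi : ℂ) ≠ 0 := by exact_mod_cast Real.pi_ne_zero
  have hI : Complex.I ≠ 0 := Complex.I_ne_zero
  have key : (k : ℂ) = j + n * d := by
    field_simp at hn
    have h2 : ((2 : ℂ) * Real.pi * Complex.I) * k
        = ((2 : ℂ) * Real.pi * Complex.I) * (j + n * d) := by
      push_cast at hn; linear_combination (↑Real.pi * Complex.I) * hn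
    exact mul_left_cancel₀ (by simp [hπ, hI]) h2
  have kz : (k : ℤ) = j + n * d := by exact_mod_cast key
  have hmod : (k : ℤ) ≡ j [ZMOD d] := Int.ModEq.symm (Int.modEq_iff_dvd.mpr ⟨n, by rw [kz]; ring⟩)
  have : (k : ℤ) % d = (j : ℤ) % d := hmod
  omega

lemma Jint_eq_zero {d : ℕ} (hd : 1 ≤ d) {ρ : ℂ → ℂ} (hII : CondII d ρ)
    {k j : ℕ} (h : k % d ≠ j % d) : Jint ρ k j = 0 := by
  set η := Complex.exp (↑Real.pi * Complex.I / d) with hη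
  have hηd : η ^ d = -1 := eta_pow hd
  have hηa : ‖η‖ = 1 := eta_abs d
  have hη0 : η ≠ 0 := fun h0 => by simp [h0] at hηa
  have hρ2 : ∀ z : ℂ, ρ (η ^ 2 * z) = ρ z := by
    intro z
    calc ρ (η ^ 2 * z) = ρ (η * (η * z)) := by ring_nf
      _ = (starRingEnd ℂ) (ρ (η * z)) := hII η hηd _
      _ = (starRingEnd ℂ) ((starRingEnd ℂ) (ρ z)) := by rw [hII η hηd]
      _ = ρ z := Complex.conj_conj _
  have habs2 : ‖η ^ 2‖ = 1 := by rw [norm_pow, hηa, one_pow]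
  have key : Jint ρ k j = ((η ^ 2) ^ k * (starRingEnd ℂ) (η ^ 2) ^ j) * Jint ρ k j := by
    conv_lhs => rw [Jint,
      ← integral_comp_rot habs2 (fun z => z ^ k * (starRingEnd ℂ) z ^ j * ρ z)]
    have : (fun z : ℂ => (η ^ 2 * z) ^ k * (starRingEnd ℂ) (η ^ 2 * z) ^ j * ρ (η ^ 2 * z))
        = fun z : ℂ => ((η ^ 2) ^ k * (starRingEnd ℂ) (η ^ 2) ^ j) *
            (z ^ k * (starRingEnd ℂ) z ^ j * ρ z) := by
      funext z
      rw [hρ2 z, map_mul, mul_pow, mul_pow]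
      ring
    rw [this, MeasureTheory.integral_const_mul]
    rfl
  have hc : (η ^ 2) ^ k * (starRingEnd ℂ) (η ^ 2) ^ j ≠ 1 := by
    intro hc1
    apply h
    apply mod_eq_of_eta_pow hd
    rw [← hη] at *
    have hcj : (starRingEnd ℂ) η = η⁻¹ := conj_eq_inv hηa
    rw [map_pow, hcj] at hc1
    have : η ^ (2 * k) = η ^ (2 * j) := by
      rw [show 2 * k = k * 2 from mul_comm 2 k, show 2 * j = j * 2 from mul_comm 2 j,
        pow_mul, pow_mul, ← pow_mul', ← pow_mul']
      rw [inv_pow, inv_pow, ← div_eq_mul_inv, div_eq_one_iff_eq (pow_ne_zero _ (pow_ne_zero _ hη0))] at hc1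
      linear_combination hc1
    exact this
  have := mul_eq_zero.mp
    (show (1 - ((η ^ 2) ^ k * (starRingEnd ℂ) (η ^ 2) ^ j)) * Jint ρ k j = 0 by
      linear_combination key)
  rcases this with h1 | h1
  · exact absurd (by linear_combination -h1) hc
  · exact h1

lemma conj_Jint {d : ℕ} {ρ : ℂ → ℂ} (hII : CondII d ρ) {ε : ℂ} (hεa : ‖ε‖ = 1)
    (hε : ε ^ d = -1) (j k : ℕ) :
    (starRingEnd ℂ) (Jint ρ j k) = (starRingEnd ℂ) ε ^ j * ε ^ k * Jint ρ k j := by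
  rw [Jint, ← integral_conj]
  have h1 : (fun z : ℂ => (starRingEnd ℂ) (z ^ j * (starRingEnd ℂ) z ^ k * ρ z))
      = fun z : ℂ => (starRingEnd ℂ) z ^ j * z ^ k * (starRingEnd ℂ) (ρ z) := by
    funext z; simp [map_mul, map_pow]
  rw [h1, ← integral_comp_rot hεa (fun z => (starRingEnd ℂ) z ^ j * z ^ k * (starRingEnd ℂ) (ρ z))]
  have h2 : (fun z : ℂ => (starRingEnd ℂ) (ε * z) ^ j * (ε * z) ^ k * (starRingEnd ℂ) (ρ (ε * z)))
      = fun z : ℂ => ((starRingEnd ℂ) ε ^ j * ε ^ k) * (z ^ k * (starRingEnd ℂ) z ^ j * ρ z) := by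
    funext z
    rw [hII ε hε z, Complex.conj_conj, map_mul, mul_pow, mul_pow]
    ring
  rw [h2, MeasureTheory.integral_const_mul]
  rfl

lemma sigmaMap_eq {d : ℕ} (hd : 1 ≤ d) (ε : ℂ) (g : Polynomial ℂ) (z : ℂ) :
    sigmaMap d ε g z
      = ∑ j ∈ g.support, (-ε) ^ (-((j % d : ℕ) : ℤ)) * (g.coeff j * (ε * z) ^ j) := by
  calc sigmaMap d ε g z
      = ∑ ℓ ∈ Finset.range d, ∑ j ∈ g.support.filter (fun k => k % d = ℓ),
          (-ε) ^ (-((j % d : ℕ) : ℤ)) * (g.coeff j * (ε * z) ^ j) := by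
        unfold sigmaMap weightComp
        refine Finset.sum_congr rfl fun ℓ _ => ?_
        rw [Polynomial.eval_finset_sum, Finset.mul_sum]
        refine Finset.sum_congr rfl fun j hj => ?_
        rw [Polynomial.eval_monomial, (Finset.mem_filter.mp hj).2]
    _ = _ := Finset.sum_fiberwise_of_maps_to
        (fun j _ => Finset.mem_range.mpr (Nat.mod_lt j hd)) _

lemma genPairing_eq {d : ℕ} (hd : 1 ≤ d) (ε : ℂ) {ρ : ℂ → ℂ} (hI : CondI ρ)
    (f g : Polynomial ℂ) :
    genPairing d ε ρ f g = ∑ k ∈ f.support, ∑ j ∈ g.support,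
      (f.coeff k * (starRingEnd ℂ) ((-ε) ^ (-((j % d : ℕ) : ℤ)) * g.coeff j * ε ^ j))
        * Jint ρ k j := by
  have hint : (fun z : ℂ => f.eval z * (starRingEnd ℂ) (sigmaMap d ε g z) * ρ z)
      = fun z : ℂ => ∑ k ∈ f.support, ∑ j ∈ g.support,
          (f.coeff k * (starRingEnd ℂ) ((-ε) ^ (-((j % d : ℕ) : ℤ)) * g.coeff j * ε ^ j))
            * (z ^ k * (starRingEnd ℂ) z ^ j * ρ z) := by
    funext z
    rw [sigmaMap_eq hd, Polynomial.eval_eq_sum, Polynomial.sum_def, map_sum,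
      Finset.sum_mul_sum, Finset.sum_mul]
    refine Finset.sum_congr rfl fun k _ => ?_
    rw [Finset.sum_mul]
    refine Finset.sum_congr rfl fun j _ => ?_
    simp only [map_mul, map_pow, mul_pow]
    ring
  rw [genPairing, hint,
    MeasureTheory.integral_finset_sum _ (fun k _ =>
      integrable_finset_sum _ (fun j _ => (basic_integrable hI k j).const_mul _))]
  refine Finset.sum_congr rfl fun k _ => ?_
  rw [MeasureTheory.integral_finset_sum _ (fun j _ => (basic_integrable hI k j).const_mul _)]
  refine Finset.sum_congr rfl fun j _ => ?_
  rw [MeasureTheory.integral_const_mul]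
  rfl

lemma key_scalar {d : ℕ} (hd : 1 ≤ d) {ρ : ℂ → ℂ} (hII : CondII d ρ)
    {ε : ℂ} (hε : ε ^ d = -1) (hε0 : ε ≠ 0) (k j : ℕ) :
    (-ε) ^ (((j % d : ℕ) : ℤ)) * Jint ρ k j
      = (-ε) ^ (-((k % d : ℕ) : ℤ)) * ε ^ k * ε ^ k * Jint ρ k j := by
  by_cases h : k % d = j % d
  · rw [← h]
    have hne : (-ε) ^ (k % d) ≠ 0 := pow_ne_zero _ (neg_ne_zero.mpr hε0)
    have hsq : ∀ m : ℕ, ((-1 : ℂ)) ^ m * (-1) ^ m = 1 := fun m => by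
      rw [← pow_add, ← two_mul, pow_mul]; norm_num
    have hk : ε ^ k = (-1 : ℂ) ^ (k / d) * ε ^ (k % d) := by
      conv_lhs => rw [← Nat.div_add_mod k d]
      rw [pow_add, pow_mul, hε]
    have main : (-ε) ^ (k % d) * (-ε) ^ (k % d) = ε ^ k * ε ^ k := by
      calc (-ε) ^ (k % d) * (-ε) ^ (k % d)
          = ((-1 : ℂ) ^ (k % d) * (-1) ^ (k % d)) * (ε ^ (k % d) * ε ^ (k % d)) := by
            rw [neg_pow]; ring
        _ = ε ^ (k % d) * ε ^ (k % d) := by rw [hsq]; ring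
        _ = ((-1 : ℂ) ^ (k / d) * (-1) ^ (k / d)) * (ε ^ (k % d) * ε ^ (k % d)) := by
            rw [hsq]; ring
        _ = ε ^ k * ε ^ k := by rw [hk]; ring
    have coeff_eq : (-ε) ^ (((k % d : ℕ) : ℤ))
        = (-ε) ^ (-((k % d : ℕ) : ℤ)) * ε ^ k * ε ^ k := by
      simp only [zpow_neg, zpow_natCast]
      field_simp
      linear_combination main
    rw [coeff_eq]
  · rw [Jint_eq_zero hd hII h]
    ring

theorem stmt_8 (d : ℕ) (hd : 1 ≤ d) (ρ : ℂ → ℂ) (hI : CondI ρ) (hII : CondII d ρ)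
    (ε : ℂ) (hε : ε ^ d = -1) :
    (∀ f g : Polynomial ℂ,
      genPairing d ε ρ f g = (starRingEnd ℂ) (genPairing d ε ρ g f)) ∧
    (∀ f : Polynomial ℂ, ∃ r : ℝ, genPairing d ε ρ f f = (r : ℂ)) := by
  have hεa : ‖ε‖ = 1 := abs_eq_one_of_pow hd hε
  have hε0 : ε ≠ 0 := fun h0 => by simp [h0] at hεa
  have hcε : (starRingEnd ℂ) ε = ε⁻¹ := conj_eq_inv hεa
  have hcnegε : (starRingEnd ℂ) (-ε) = (-ε)⁻¹ := by
    rw [map_neg, hcε, neg_inv]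
  have hcεinv : (starRingEnd ℂ) ε⁻¹ = ε := by rw [map_inv₀, hcε, inv_inv]
  have hconjzpow : ∀ m : ℤ, (starRingEnd ℂ) ((-ε) ^ m) = (-ε) ^ (-m) := fun m => by
    rw [map_zpow₀, hcnegε, inv_zpow, ← zpow_neg]
  have main : ∀ f g : Polynomial ℂ,
      genPairing d ε ρ f g = (starRingEnd ℂ) (genPairing d ε ρ g f) := by
    intro f g
    rw [genPairing_eq hd ε hI f g, genPairing_eq hd ε hI g f, map_sum]
    rw [Finset.sum_comm]
    refine Finset.sum_congr rfl fun k hk => ?_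
    rw [map_sum]
    refine Finset.sum_congr rfl fun j hj => ?_
    -- termwise identity
    simp only [map_mul, map_pow, Complex.conj_conj, hconjzpow, hcε, hcεinv, neg_neg]
    have hJ := conj_Jint hII hεa hε k j
    rw [hcε] at hJ
    rw [hJ]
    have hkey := key_scalar hd hII hε hε0 j k
    linear_combination (f.coeff j * (starRingEnd ℂ) (g.coeff k) * (ε⁻¹) ^ k) * hkey
  refine ⟨main, fun f => ?_⟩
  have := (main f f).symm
  exact Complex.conj_eq_iff_real.mp this
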